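/- Let H be a complex Hilbert space, X a linear subspace of B(H), and τ : X → X a conjugate-linear involution (τ(τ(x)) = x for all x) satisfying ‖[τ(x_{ji})]‖ = ‖[x_{ij}]‖ for every n ∈ ℕ and every n×n matrix [x_{ij}] with entries in X, where the norms are those of Mₙ(B(H)) with its C*-norm. Then the map Φ : X → M₂(B(H)) defined by Φ(x) = [[0, x],[τ(x)*, 0]] is a ℂ-linear complete isometry (for every n, the entrywise amplification Mₙ(X) → Mₙ(M₂(B(H))) is isometric for the C*-matrix norms), its range Φ(X) is a selfadjoint subspace of the C*-algebra M₂(B(H)), and Φ(τ(x)) = Φ(x)* for all x ∈ X. -/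

import Mathlib

set_option maxHeartbeats 1000000
set_option synthInstance.maxHeartbeats 1000000

/-- The bounded operator on the Hilbert space `ℓ²(Fin n; E)` associated to an `n × n` matrix
of bounded operators on `E`. -/
noncomputable def Matrix.toCLM {E : Type*} [NormedAddCommGroup E] [InnerProductSpace ℂ E]
    {n : ℕ} (M : Matrix (Fin n) (Fin n) (E →L[ℂ] E)) :
    PiLp 2 (fun _ : Fin n => E) →L[ℂ] PiLp 2 (fun _ : Fin n => E) :=
  ((PiLp.continuousLinearEquiv 2 ℂ (fun _ : Fin n => E)).symm.toContinuousLinearMap.comp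
    (ContinuousLinearMap.pi fun i => ∑ j, (M i j).comp (ContinuousLinearMap.proj j))).comp
    (PiLp.continuousLinearEquiv 2 ℂ (fun _ : Fin n => E)).toContinuousLinearMap

/-- The canonical C*-norm of an `n × n` matrix of bounded operators on a Hilbert space `E`,
namely the operator norm of the associated operator on `ℓ²(Fin n; E)`. -/
noncomputable def Matrix.cstarNorm {E : Type*} [NormedAddCommGroup E] [InnerProductSpace ℂ E]
    {n : ℕ} (M : Matrix (Fin n) (Fin n) (E →L[ℂ] E)) : ℝ :=
  ‖M.toCLM‖

instance PiLp.completeSpaceAux {ι : Type*} [Fintype ι] {E : Type*} [NormedAddCommGroup E]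
    [CompleteSpace E] : CompleteSpace (PiLp 2 (fun _ : ι => E)) :=
  inferInstance

section Aux

variable {E : Type*} [NormedAddCommGroup E] [InnerProductSpace ℂ E] {n : ℕ}

lemma Matrix.toCLM_apply (M : Matrix (Fin n) (Fin n) (E →L[ℂ] E))
    (ξ : PiLp 2 (fun _ : Fin n => E)) (i : Fin n) :
    M.toCLM ξ i = ∑ j, M i j (ξ j) := by
  simp [Matrix.toCLM, PiLp.continuousLinearEquiv, ContinuousLinearMap.sum_apply]
  rfl

lemma PiLp.sum_apply'' {ι κ E : Type*} [Fintype ι] [Fintype κ] [NormedAddCommGroup E]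
    (f : κ → PiLp 2 (fun _ : ι => E)) (i : ι) :
    (∑ k, f k) i = ∑ k, f k i :=
  by simp [WithLp.ofLp_sum]

lemma Matrix.toCLM_star [CompleteSpace E] (M : Matrix (Fin n) (Fin n) (E →L[ℂ] E)) :
    (Matrix.of fun i j => star (M j i)).toCLM = ContinuousLinearMap.adjoint M.toCLM := by
  rw [ContinuousLinearMap.eq_adjoint_iff]
  intro ξ η
  simp only [PiLp.inner_apply, Matrix.toCLM_apply, Matrix.of_apply, sum_inner, inner_sum,
    ContinuousLinearMap.star_eq_adjoint, ContinuousLinearMap.adjoint_inner_left]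
  exact Finset.sum_comm

lemma Matrix.cstarNorm_star [CompleteSpace E] (M : Matrix (Fin n) (Fin n) (E →L[ℂ] E)) :
    (Matrix.of fun i j => star (M j i)).cstarNorm = M.cstarNorm := by
  rw [Matrix.cstarNorm, Matrix.toCLM_star]
  exact LinearIsometryEquiv.norm_map ContinuousLinearMap.adjoint M.toCLM

lemma offdiag_cstarNorm (P Q : Matrix (Fin n) (Fin n) (E →L[ℂ] E)) :
    (Matrix.of fun i j =>
        (!![0, P i j; Q i j, 0] : Matrix (Fin 2) (Fin 2) (E →L[ℂ] E)).toCLM).cstarNorm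
      = max P.cstarNorm Q.cstarNorm := by
  classical
  set T := (Matrix.of fun i j =>
      (!![0, P i j; Q i j, 0] : Matrix (Fin 2) (Fin 2) (E →L[ℂ] E)).toCLM).toCLM with hT
  set up : PiLp 2 (fun _ : Fin n => PiLp 2 (fun _ : Fin 2 => E)) → PiLp 2 (fun _ : Fin n => E) :=
    fun ξ => (WithLp.equiv 2 _).symm fun i => ξ i 0 with hup
  set vp : PiLp 2 (fun _ : Fin n => PiLp 2 (fun _ : Fin 2 => E)) → PiLp 2 (fun _ : Fin n => E) :=
    fun ξ => (WithLp.equiv 2 _).symm fun i => ξ i 1 with hvp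
  have h0 : ∀ ξ i, T ξ i 0 = P.toCLM (vp ξ) i := by
    intro ξ i
    rw [hT, Matrix.toCLM_apply, PiLp.sum_apply'']
    simp [Matrix.toCLM_apply, Fin.sum_univ_two, hvp, PiLp.toLp_apply]
  have h1 : ∀ ξ i, T ξ i 1 = Q.toCLM (up ξ) i := by
    intro ξ i
    rw [hT, Matrix.toCLM_apply, PiLp.sum_apply'']
    simp [Matrix.toCLM_apply, Fin.sum_univ_two, hup, PiLp.toLp_apply]
  have hTsq : ∀ ξ, ‖T ξ‖ ^ 2 = ‖P.toCLM (vp ξ)‖ ^ 2 + ‖Q.toCLM (up ξ)‖ ^ 2 := by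
    intro ξ
    rw [PiLp.norm_sq_eq_of_L2, PiLp.norm_sq_eq_of_L2, PiLp.norm_sq_eq_of_L2,
      ← Finset.sum_add_distrib]
    refine Finset.sum_congr rfl fun i _ => ?_
    rw [PiLp.norm_sq_eq_of_L2, Fin.sum_univ_two, h0, h1]
  have hxsq : ∀ ξ, ‖ξ‖ ^ 2 = ‖up ξ‖ ^ 2 + ‖vp ξ‖ ^ 2 := by
    intro ξ
    rw [PiLp.norm_sq_eq_of_L2, PiLp.norm_sq_eq_of_L2, PiLp.norm_sq_eq_of_L2,
      ← Finset.sum_add_distrib]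
    refine Finset.sum_congr rfl fun i _ => ?_
    rw [PiLp.norm_sq_eq_of_L2, Fin.sum_univ_two]
    simp [hup, hvp, PiLp.toLp_apply]
  have hmaxnn : (0:ℝ) ≤ max P.cstarNorm Q.cstarNorm :=
    le_max_of_le_left (norm_nonneg P.toCLM)
  show ‖T‖ = max P.cstarNorm Q.cstarNorm
  refine le_antisymm ?_ (max_le ?_ ?_)
  · refine ContinuousLinearMap.opNorm_le_bound _ hmaxnn fun ξ => ?_
    have l1 : ‖P.toCLM (vp ξ)‖ ≤ max P.cstarNorm Q.cstarNorm * ‖vp ξ‖ :=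
      (P.toCLM.le_opNorm _).trans
        (mul_le_mul_of_nonneg_right (le_max_left _ _) (norm_nonneg _))
    have l2 : ‖Q.toCLM (up ξ)‖ ≤ max P.cstarNorm Q.cstarNorm * ‖up ξ‖ :=
      (Q.toCLM.le_opNorm _).trans
        (mul_le_mul_of_nonneg_right (le_max_right _ _) (norm_nonneg _))
    have sq1 := pow_le_pow_left₀ (norm_nonneg _) l1 2
    have sq2 := pow_le_pow_left₀ (norm_nonneg _) l2 2
    refine le_of_pow_le_pow_left₀ two_ne_zero (mul_nonneg hmaxnn (norm_nonneg _)) ?_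
    have hts := hTsq ξ
    have hxs2 : (max P.cstarNorm Q.cstarNorm * ‖ξ‖) ^ 2
        = (max P.cstarNorm Q.cstarNorm * ‖up ξ‖) ^ 2
          + (max P.cstarNorm Q.cstarNorm * ‖vp ξ‖) ^ 2 := by
      rw [mul_pow, mul_pow, mul_pow, hxsq ξ]; ring
    linarith [sq1, sq2, hts, hxs2]
  · refine ContinuousLinearMap.opNorm_le_bound _ (norm_nonneg T) fun v => ?_
    set ξ : PiLp 2 (fun _ : Fin n => PiLp 2 (fun _ : Fin 2 => E)) :=
      (WithLp.equiv 2 _).symm fun i => (WithLp.equiv 2 _).symm ![0, v i] with hξ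
    have e0 : up ξ = 0 := by
      ext j
      simp [hup, hξ, PiLp.toLp_apply]
    have e1 : vp ξ = v := by
      ext j
      simp [hvp, hξ, PiLp.toLp_apply]
    have hts := hTsq ξ
    rw [e0, e1, map_zero, norm_zero] at hts
    have hxs := hxsq ξ
    rw [e0, e1, norm_zero] at hxs
    have hPv : ‖P.toCLM v‖ = ‖T ξ‖ := by
      rw [← Real.sqrt_sq (norm_nonneg (P.toCLM v)), ← Real.sqrt_sq (norm_nonneg (T ξ)), hts]
      norm_num
    have hξv : ‖ξ‖ = ‖v‖ := by
      rw [← Real.sqrt_sq (norm_nonneg ξ), ← Real.sqrt_sq (norm_nonneg v), hxs]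
      norm_num
    rw [hPv, ← hξv]
    exact T.le_opNorm ξ
  · refine ContinuousLinearMap.opNorm_le_bound _ (norm_nonneg T) fun u => ?_
    set ξ : PiLp 2 (fun _ : Fin n => PiLp 2 (fun _ : Fin 2 => E)) :=
      (WithLp.equiv 2 _).symm fun i => (WithLp.equiv 2 _).symm ![u i, 0] with hξ
    have e0 : up ξ = u := by
      ext j
      simp [hup, hξ, PiLp.toLp_apply]
    have e1 : vp ξ = 0 := by
      ext j
      simp [hvp, hξ, PiLp.toLp_apply]
    have hts := hTsq ξ
    rw [e0, e1, map_zero, norm_zero] at hts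
    have hxs := hxsq ξ
    rw [e0, e1, norm_zero] at hxs
    have hQu : ‖Q.toCLM u‖ = ‖T ξ‖ := by
      rw [← Real.sqrt_sq (norm_nonneg (Q.toCLM u)), ← Real.sqrt_sq (norm_nonneg (T ξ)), hts]
      norm_num
    have hξu : ‖ξ‖ = ‖u‖ := by
      rw [← Real.sqrt_sq (norm_nonneg ξ), ← Real.sqrt_sq (norm_nonneg u), hxs]
      norm_num
    rw [hQu, ← hξu]
    exact T.le_opNorm ξ

end Aux

/-- Let `X ⊆ B(H)` be a subspace and `τ : X → X` a conjugate-linear involution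
with `‖[τ(x_{ji})]‖ = ‖[x_{ij}]‖` for all matrices over `X` (C*-matrix norms).  Then
`Φ(x) = [[0, x], [τ(x)*, 0]] ∈ M₂(B(H))` is a `ℂ`-linear complete isometry, its range is a
selfadjoint subspace of `M₂(B(H))`, and `Φ(τ(x)) = Φ(x)*`. -/
theorem selfadjoint_embedding_of_involutive_operator_space
    {H : Type*} [NormedAddCommGroup H] [InnerProductSpace ℂ H] [CompleteSpace H]
    (X : Submodule ℂ (H →L[ℂ] H)) (τ : X → X)
    (hadd : ∀ x y : X, τ (x + y) = τ x + τ y)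
    (hsmul : ∀ (c : ℂ) (x : X), τ (c • x) = (starRingEnd ℂ c) • τ x)
    (hinvol : ∀ x : X, τ (τ x) = x)
    (hnorm : ∀ (n : ℕ) (M : Matrix (Fin n) (Fin n) X),
      (Matrix.of fun i j => ((τ (M j i) : X) : H →L[ℂ] H)).cstarNorm
        = (Matrix.of fun i j => ((M i j : X) : H →L[ℂ] H)).cstarNorm)
    (Φ : X → Matrix (Fin 2) (Fin 2) (H →L[ℂ] H))
    (hΦ : ∀ x : X, Φ x = !![0, (x : H →L[ℂ] H); star ((τ x : X) : H →L[ℂ] H), 0]) :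
    (∀ x y : X, Φ (x + y) = Φ x + Φ y) ∧
    (∀ (c : ℂ) (x : X), Φ (c • x) = c • Φ x) ∧
    (∀ (n : ℕ) (M : Matrix (Fin n) (Fin n) X),
      (Matrix.of fun i j => (Φ (M i j)).toCLM).cstarNorm
        = (Matrix.of fun i j => ((M i j : X) : H →L[ℂ] H)).cstarNorm) ∧
    (∀ x : X, ∃ y : X, star (Φ x) = Φ y) ∧
    (∀ x : X, Φ (τ x) = star (Φ x)) := by
  have h5 : ∀ x : X, Φ (τ x) = star (Φ x) := by
    intro x
    ext i j
    fin_cases i <;> fin_cases j <;>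
      simp [hΦ, hinvol, Matrix.star_apply, star_star]
  refine ⟨?_, ?_, ?_, fun x => ⟨τ x, (h5 x).symm⟩, h5⟩
  · intro x y
    ext i j
    fin_cases i <;> fin_cases j <;>
      simp [hΦ, hadd, Matrix.add_apply]
  · intro c x
    refine Matrix.ext fun i j => ?_
    fin_cases i <;> fin_cases j <;>
      simp [hΦ, hsmul, Matrix.smul_apply, star_smul, RCLike.star_def, Complex.conj_conj]
  · intro n M
    have hM : (Matrix.of fun i j => (Φ (M i j)).toCLM)
        = Matrix.of fun i j =>
            (!![0, ((M i j : X) : H →L[ℂ] H);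
               star ((τ (M i j) : X) : H →L[ℂ] H), 0]).toCLM := by
      funext i j
      simp only [Matrix.of_apply, hΦ]
    rw [hM]
    have hoff := offdiag_cstarNorm (E := H) (n := n)
      (Matrix.of fun i j => ((M i j : X) : H →L[ℂ] H))
      (Matrix.of fun i j => star ((τ (M i j) : X) : H →L[ℂ] H))
    simp only [Matrix.of_apply] at hoff
    rw [hoff]
    have hQ : (Matrix.of fun i j => star ((τ (M i j) : X) : H →L[ℂ] H)).cstarNorm
        = (Matrix.of fun i j => ((M i j : X) : H →L[ℂ] H)).cstarNorm := by
      have hstar : (Matrix.of fun i j => star ((τ (M i j) : X) : H →L[ℂ] H))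
          = Matrix.of fun i j =>
              star ((Matrix.of fun a b => ((τ (M b a) : X) : H →L[ℂ] H)) j i) := rfl
      rw [hstar, Matrix.cstarNorm_star]
      exact hnorm n M
    rw [hQ, max_self]
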